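/- Let m ≥ 1 and let r ≥ 2 be even. Then M(mK_r) = mr²(mr+1)²/8 − mr(mr+1)(2mr+1)/12 (an equality of rational numbers). -/

import Mathlib

open Finset

/-- The product-sum M(f) of a vertex labeling: the sum of `f u * f v` over all edges
`{u,v}` of `G`, each edge counted exactly once. -/
noncomputable def prodSum {V : Type*} [Fintype V] (G : SimpleGraph V) (f : V → ℕ) : ℕ := by
  classical
  exact ∑ e ∈ G.edgeFinset, Sym2.lift ⟨fun u v => f u * f v, fun u v => Nat.mul_comm _ _⟩ e

/-- A labeling of a graph on `V`: a bijection from the vertices onto `{1,…,|V|}`. -/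
def IsLabeling (V : Type*) [Fintype V] (f : V → ℕ) : Prop :=
  Set.BijOn f Set.univ (Set.Icc 1 (Fintype.card V))

/-- MinPS of `G`: the minimum of `M(f)` over all labelings `f`. -/
noncomputable def minPS {V : Type*} [Fintype V] (G : SimpleGraph V) : ℕ :=
  sInf { m | ∃ f : V → ℕ, IsLabeling V f ∧ prodSum G f = m }

/-- `mK_r`: the vertex-disjoint union of `m` copies of the complete graph `K_r`.
Vertex `(i, x)` lies in the `i`-th copy; two vertices are adjacent iff they are
distinct and lie in the same copy. -/
def mKGraph (m r : ℕ) : SimpleGraph (Fin m × Fin r) where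
  Adj a b := a.1 = b.1 ∧ a.2 ≠ b.2
  symm := ⟨fun a b h => ⟨h.1.symm, h.2.symm⟩⟩
  loopless := ⟨fun a h => h.2 rfl⟩

instance (m r : ℕ) : DecidableRel (mKGraph m r).Adj :=
  fun a b => inferInstanceAs (Decidable (a.1 = b.1 ∧ a.2 ≠ b.2))

lemma two_prodSum {V : Type*} [Fintype V] (G : SimpleGraph V) [DecidableRel G.Adj] (f : V → ℕ) :
    2 * prodSum G f = ∑ u : V, ∑ v : V, if G.Adj u v then f u * f v else 0 := by
  classical
  set F : Sym2 V → ℕ := Sym2.lift ⟨fun u v => f u * f v, fun u v => Nat.mul_comm _ _⟩ with hF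
  have hps : prodSum G f = ∑ e ∈ G.edgeFinset, F e := by
    rw [prodSum]
    apply Finset.sum_congr _ (fun _ _ => rfl)
    congr!
  have himg : (univ : Finset G.Dart).image SimpleGraph.Dart.edge = G.edgeFinset := by
    ext e
    simp only [mem_image, mem_univ, true_and, SimpleGraph.mem_edgeFinset]
    constructor
    · rintro ⟨d, rfl⟩; exact d.edge_mem
    · intro he
      induction e with
      | h u v => exact ⟨⟨(u,v), he⟩, rfl⟩
  have hdart : ∑ d : G.Dart, F d.edge = 2 * prodSum G f := by
    rw [Finset.sum_comp F SimpleGraph.Dart.edge, himg, hps, Finset.mul_sum]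
    refine Finset.sum_congr rfl fun e he => ?_
    have h2 : (univ.filter fun d : G.Dart => d.edge = e).card = 2 := by
      have := G.dart_edge_fiber_card e (SimpleGraph.mem_edgeFinset.mp he)
      convert this using 2
    rw [h2]
    simp [smul_eq_mul]
  rw [← hdart]
  have h1 : ∑ d : G.Dart, F d.edge = ∑ d : G.Dart, f d.fst * f d.snd := by
    refine Finset.sum_congr rfl fun d _ => ?_
    rw [SimpleGraph.Dart.edge, hF]
    rfl
  have h3 : ∑ u : V, ∑ v : V, (if G.Adj u v then f u * f v else 0)
      = ∑ p ∈ (univ ×ˢ univ).filter (fun p : V × V => G.Adj p.1 p.2), f p.1 * f p.2 := by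
    rw [Finset.sum_filter, Finset.sum_product]
  rw [h1, h3]
  refine Finset.sum_bij (fun d _ => d.toProd) ?_ ?_ ?_ ?_
  · intro d _
    simp [d.adj]
  · intro d _ d' _ h
    exact SimpleGraph.Dart.ext _ _ h
  · rintro ⟨u, v⟩ hp
    simp only [mem_filter, mem_product, mem_univ, true_and, and_true] at hp
    exact ⟨⟨(u, v), hp⟩, mem_univ _, rfl⟩
  · intro d _; rfl

lemma sq_sum_aux {γ : Type*} [Fintype γ] [DecidableEq γ] (g : γ → ℕ) :
    (∑ x : γ, ∑ y : γ, if x ≠ y then g x * g y else 0) + ∑ x : γ, g x ^ 2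
      = (∑ x : γ, g x) ^ 2 := by
  have h1 : (∑ x : γ, g x) ^ 2 = ∑ x : γ, ∑ y : γ, g x * g y := by
    rw [sq, Finset.sum_mul_sum]
  rw [h1, ← Finset.sum_add_distrib]
  refine Finset.sum_congr rfl fun x _ => ?_
  have h2 : ∀ y : γ, g x * g y
      = (if x ≠ y then g x * g y else 0) + (if x = y then g x * g y else 0) := by
    intro y; by_cases h : x = y <;> simp [h]
  rw [Finset.sum_congr rfl (fun y _ => h2 y), Finset.sum_add_distrib, Finset.sum_ite_eq]
  simp [sq]

lemma key_identity (m r : ℕ) (f : Fin m × Fin r → ℕ) :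
    2 * prodSum (mKGraph m r) f + ∑ p : Fin m × Fin r, f p ^ 2
      = ∑ i : Fin m, (∑ x : Fin r, f (i, x)) ^ 2 := by
  rw [two_prodSum]
  have hadj : ∀ (i : Fin m) (x : Fin r) (j : Fin m) (y : Fin r),
      (mKGraph m r).Adj (i, x) (j, y) ↔ (i = j ∧ x ≠ y) := by
    intro i x j y; rfl
  have hcollapse : ∀ (i : Fin m) (x : Fin r),
      (∑ v : Fin m × Fin r, if (mKGraph m r).Adj (i, x) v then f (i, x) * f v else 0)
        = ∑ y : Fin r, if x ≠ y then f (i, x) * f (i, y) else 0 := by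
    intro i x
    rw [Fintype.sum_prod_type]
    rw [Finset.sum_eq_single i]
    · refine Finset.sum_congr rfl fun y _ => ?_
      simp only [hadj]
      simp
    · intro j _ hji
      refine Finset.sum_eq_zero fun y _ => ?_
      simp only [hadj]
      simp [Ne.symm hji]
    · simp
  rw [Fintype.sum_prod_type]
  simp only [hcollapse]
  rw [Fintype.sum_prod_type, ← Finset.sum_add_distrib]
  exact Finset.sum_congr rfl fun i _ => sq_sum_aux fun x => f (i, x)

/-! ### the explicit optimal labeling -/

def gLab (m r s : ℕ) : Fin m × Fin r → ℕ := fun p =>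
  if (p.2 : ℕ) < s then (p.1 : ℕ) * s + (p.2 : ℕ) + 1
  else 2 * (m * s) - ((p.1 : ℕ) * s + ((p.2 : ℕ) - s))

lemma gLab_apply (m r s : ℕ) (i : Fin m) (x : Fin r) :
    gLab m r s (i, x) = if (x : ℕ) < s then (i : ℕ) * s + (x : ℕ) + 1
      else 2 * (m * s) - ((i : ℕ) * s + ((x : ℕ) - s)) := rfl

lemma idx_lt {m s : ℕ} (i : Fin m) {t : ℕ} (ht : t < s) : (i : ℕ) * s + t < m * s := by
  calc (i : ℕ) * s + t < (i : ℕ) * s + s := by omega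
  _ = ((i : ℕ) + 1) * s := by ring
  _ ≤ m * s := Nat.mul_le_mul_right s i.isLt

lemma quot_unique {s i j x y : ℕ} (hx : x < s) (hy : y < s) (h : i * s + x = j * s + y) :
    i = j ∧ x = y := by
  have hs : 0 < s := by omega
  have di : (i * s + x) / s = i := by
    rw [mul_comm, Nat.mul_add_div hs, Nat.div_eq_of_lt hx, add_zero]
  have dj : (j * s + y) / s = j := by
    rw [mul_comm, Nat.mul_add_div hs, Nat.div_eq_of_lt hy, add_zero]
  have hij : i = j := by rw [← di, ← dj, h]
  subst hij
  omega

lemma gLab_inj (m r s : ℕ) (hr : r = 2 * s) : Function.Injective (gLab m r s) := by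
  rintro ⟨i, x⟩ ⟨j, y⟩ h
  have hx2 : (x : ℕ) < 2 * s := by have := x.isLt; omega
  have hy2 : (y : ℕ) < 2 * s := by have := y.isLt; omega
  rw [gLab_apply, gLab_apply] at h
  by_cases h1 : (x : ℕ) < s <;> by_cases h2 : (y : ℕ) < s
  · rw [if_pos h1, if_pos h2] at h
    have := quot_unique h1 h2 (by omega : (i:ℕ) * s + (x:ℕ) = (j:ℕ) * s + (y:ℕ))
    exact Prod.ext (Fin.ext this.1) (Fin.ext this.2)
  · exfalso
    rw [if_pos h1, if_neg h2] at h
    have hb1 : (i : ℕ) * s + (x : ℕ) < m * s := idx_lt i h1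
    have hb2 : (j : ℕ) * s + ((y : ℕ) - s) < m * s := idx_lt j (by omega)
    omega
  · exfalso
    rw [if_neg h1, if_pos h2] at h
    have hb1 : (j : ℕ) * s + (y : ℕ) < m * s := idx_lt j h2
    have hb2 : (i : ℕ) * s + ((x : ℕ) - s) < m * s := idx_lt i (by omega)
    omega
  · rw [if_neg h1, if_neg h2] at h
    have hb1 : (i : ℕ) * s + ((x : ℕ) - s) < m * s := idx_lt i (by omega)
    have hb2 : (j : ℕ) * s + ((y : ℕ) - s) < m * s := idx_lt j (by omega)
    have heq : (i : ℕ) * s + ((x : ℕ) - s) = (j : ℕ) * s + ((y : ℕ) - s) := by omega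
    have := quot_unique (by omega : (x:ℕ) - s < s) (by omega : (y:ℕ) - s < s) heq
    exact Prod.ext (Fin.ext this.1) (Fin.ext (show (x:ℕ) = (y:ℕ) by omega))

lemma gLab_mem (m r s : ℕ) (hm : 1 ≤ m) (hs : 0 < s) (p : Fin m × Fin r) (hr : r = 2 * s) :
    gLab m r s p ∈ Finset.Icc 1 (2 * (m * s)) := by
  obtain ⟨i, x⟩ := p
  have hms : 1 ≤ m * s := Nat.one_le_iff_ne_zero.mpr (by positivity)
  have hx2 : (x : ℕ) < 2 * s := by have := x.isLt; omega
  rw [gLab_apply, Finset.mem_Icc]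
  by_cases h1 : (x : ℕ) < s
  · rw [if_pos h1]
    have := idx_lt i h1
    omega
  · rw [if_neg h1]
    have := idx_lt i (show (x : ℕ) - s < s by omega)
    omega

lemma gLab_isLabeling (m r s : ℕ) (hm : 1 ≤ m) (hs : 0 < s) (hr : r = 2 * s) :
    IsLabeling (Fin m × Fin r) (gLab m r s) := by
  have hcard : Fintype.card (Fin m × Fin r) = 2 * (m * s) := by
    simp [hr]; ring
  unfold IsLabeling
  rw [hcard]
  have hsub : (univ : Finset (Fin m × Fin r)).image (gLab m r s) ⊆ Finset.Icc 1 (2 * (m * s)) := by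
    intro k hk
    obtain ⟨p, _, rfl⟩ := Finset.mem_image.mp hk
    exact gLab_mem m r s hm hs p hr
  have hcardim : ((univ : Finset (Fin m × Fin r)).image (gLab m r s)).card = 2 * (m * s) := by
    rw [Finset.card_image_of_injective _ (gLab_inj m r s hr), card_univ, hcard]
  have heq : (univ : Finset (Fin m × Fin r)).image (gLab m r s) = Finset.Icc 1 (2 * (m * s)) :=
    Finset.eq_of_subset_of_card_le hsub (by rw [hcardim, Nat.card_Icc]; omega)
  refine ⟨fun p _ => ?_, fun a _ b _ h => gLab_inj m r s hr h, fun k hk => ?_⟩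
  · have := gLab_mem m r s hm hs p hr
    rw [Finset.mem_Icc] at this
    exact Set.mem_Icc.mpr this
  · have hk' : k ∈ Finset.Icc 1 (2 * (m * s)) := Finset.mem_Icc.mpr (Set.mem_Icc.mp hk)
    rw [← heq] at hk'
    obtain ⟨p, _, hp⟩ := Finset.mem_image.mp hk'
    exact ⟨p, Set.mem_univ _, hp⟩

lemma gLab_row (m r s : ℕ) (hr : r = 2 * s) (i : Fin m) :
    ∑ x : Fin r, gLab m r s (i, x) = s * (2 * (m * s) + 1) := by
  subst hr
  have hG : ∀ x : Fin (2 * s), gLab m (2 * s) s (i, x)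
      = (fun k : ℕ => if k < s then (i : ℕ) * s + k + 1
          else 2 * (m * s) - ((i : ℕ) * s + (k - s))) (x : ℕ) := fun x => rfl
  rw [Finset.sum_congr rfl fun x _ => hG x,
    Fin.sum_univ_eq_sum_range (fun k : ℕ => if k < s then (i : ℕ) * s + k + 1
      else 2 * (m * s) - ((i : ℕ) * s + (k - s))) (2 * s),
    two_mul, Finset.range_eq_Ico,
    ← Finset.sum_Ico_consecutive _ (Nat.zero_le s) (Nat.le_add_right s s)]
  rw [Finset.sum_Ico_eq_sum_range (fun k => if k < s then (i : ℕ) * s + k + 1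
      else 2 * (m * s) - ((i : ℕ) * s + (k - s))) s (s + s)]
  simp only [Nat.add_sub_cancel_left]
  rw [← Finset.range_eq_Ico, ← Finset.sum_add_distrib]
  have hterm : ∀ k ∈ Finset.range s,
      ((if k < s then (i : ℕ) * s + k + 1 else 2 * (m * s) - ((i : ℕ) * s + (k - s)))
        + (if s + k < s then (i : ℕ) * s + (s + k) + 1
            else 2 * (m * s) - ((i : ℕ) * s + k)))
        = 2 * (m * s) + 1 := by
    intro k hk
    rw [Finset.mem_range] at hk
    rw [if_pos hk, if_neg (by omega)]
    have := idx_lt i hk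
    omega
  rw [Finset.sum_congr rfl hterm, Finset.sum_const, Finset.card_range, smul_eq_mul]

lemma labeling_sum {V : Type*} [Fintype V] {f : V → ℕ} (hf : IsLabeling V f) (h : ℕ → ℚ) :
    ∑ p : V, h (f p) = ∑ k ∈ Finset.Icc 1 (Fintype.card V), h k := by
  classical
  have himg : (univ : Finset V).image f = Finset.Icc 1 (Fintype.card V) := by
    apply Finset.coe_injective
    rw [Finset.coe_image, Finset.coe_univ, Finset.coe_Icc]
    exact hf.image_eq
  rw [← himg, Finset.sum_image (fun a _ b _ hab => hf.injOn (Set.mem_univ a) (Set.mem_univ b) hab)]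

lemma sum_Icc_sq (n : ℕ) :
    ∑ k ∈ Finset.Icc 1 n, (k : ℚ) ^ 2 = n * (n + 1) * (2 * n + 1) / 6 := by
  induction n with
  | zero => simp
  | succ n ih =>
    rw [Finset.sum_Icc_succ_top (by omega), ih]
    push_cast
    ring


/-- For `m ≥ 1` and even `r ≥ 2`,
`M(mK_r) = mr²(mr+1)²/8 − mr(mr+1)(2mr+1)/12`. -/
theorem statement4 (m r : ℕ) (hm : 1 ≤ m) (hr : 2 ≤ r) (hr2 : Even r) :
    (minPS (mKGraph m r) : ℚ) =
      (m : ℚ) * r ^ 2 * (m * r + 1) ^ 2 / 8 - m * r * (m * r + 1) * (2 * m * r + 1) / 12 := by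
  obtain ⟨s, hs⟩ := hr2
  have hr' : r = 2 * s := by omega
  have hs0 : 0 < s := by omega
  have hcard : Fintype.card (Fin m × Fin r) = m * r := by simp
  set g := gLab m r s with hg
  have hgl : IsLabeling (Fin m × Fin r) g := gLab_isLabeling m r s hm hs0 hr'
  set S := { n | ∃ f : Fin m × Fin r → ℕ, IsLabeling (Fin m × Fin r) f ∧
      prodSum (mKGraph m r) f = n } with hS
  have hne : S.Nonempty := ⟨prodSum (mKGraph m r) g, g, hgl, rfl⟩
  obtain ⟨f₀, hf₀, hf₀v⟩ := Nat.sInf_mem hne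
  have hle : sInf S ≤ prodSum (mKGraph m r) g := Nat.sInf_le ⟨g, hgl, rfl⟩
  -- ℚ-level key identity for any labeling
  have key : ∀ f : Fin m × Fin r → ℕ, IsLabeling (Fin m × Fin r) f →
      2 * (prodSum (mKGraph m r) f : ℚ) + ∑ k ∈ Finset.Icc 1 (m * r), (k : ℚ) ^ 2
        = ∑ i : Fin m, (∑ x : Fin r, (f (i, x) : ℚ)) ^ 2 := by
    intro f hf
    have h := key_identity m r f
    have hcast : ((2 * prodSum (mKGraph m r) f + ∑ p : Fin m × Fin r, f p ^ 2 : ℕ) : ℚ)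
        = ((∑ i : Fin m, (∑ x : Fin r, f (i, x)) ^ 2 : ℕ) : ℚ) := by exact_mod_cast h
    push_cast at hcast
    have hsq : (∑ p : Fin m × Fin r, (f p : ℚ) ^ 2)
        = ∑ k ∈ Finset.Icc 1 (m * r), (k : ℚ) ^ 2 := by
      have := labeling_sum hf (fun k => (k : ℚ) ^ 2)
      rw [hcard] at this
      exact this
    rw [hsq] at hcast
    exact hcast
  -- row sums of g
  have hrowq : ∀ i : Fin m, (∑ x : Fin r, (g (i, x) : ℚ)) = s * (2 * (m * s) + 1) := by
    intro i
    have := gLab_row m r s hr' i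
    exact_mod_cast congrArg (Nat.cast : ℕ → ℚ) this
  -- total label sums agree
  have htot : ∀ f : Fin m × Fin r → ℕ, IsLabeling (Fin m × Fin r) f →
      ∑ i : Fin m, (∑ x : Fin r, (f (i, x) : ℚ)) = ∑ k ∈ Finset.Icc 1 (m * r), (k : ℚ) := by
    intro f hf
    have h1 := labeling_sum hf (fun k => (k : ℚ))
    rw [hcard] at h1
    have h2 : ∑ p : Fin m × Fin r, ((f p : ℚ)) = ∑ i : Fin m, ∑ x : Fin r, ((f (i, x) : ℚ)) :=
      Fintype.sum_prod_type (f := fun p : Fin m × Fin r => ((f p : ℚ)))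
    rw [← h2]
    exact h1
  have hgsq : ∑ i : Fin m, (∑ x : Fin r, (g (i, x) : ℚ)) ^ 2
      = m * ((s : ℚ) * (2 * (m * s) + 1)) ^ 2 := by
    rw [Finset.sum_congr rfl fun i _ => by rw [hrowq i], Finset.sum_const, Finset.card_univ,
      Fintype.card_fin, nsmul_eq_mul]
  -- Cauchy–Schwarz lower bound
  have hcs : ∑ i : Fin m, (∑ x : Fin r, (g (i, x) : ℚ)) ^ 2
      ≤ ∑ i : Fin m, (∑ x : Fin r, (f₀ (i, x) : ℚ)) ^ 2 := by
    have hcheb := sq_sum_le_card_mul_sum_sq (s := (univ : Finset (Fin m)))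
      (f := fun i => ∑ x : Fin r, (f₀ (i, x) : ℚ))
    rw [Finset.card_univ, Fintype.card_fin] at hcheb
    have hsum : ∑ i : Fin m, (∑ x : Fin r, (f₀ (i, x) : ℚ))
        = ∑ i : Fin m, (∑ x : Fin r, (g (i, x) : ℚ)) := by
      rw [htot f₀ hf₀, htot g hgl]
    have hgsum : ∑ i : Fin m, (∑ x : Fin r, (g (i, x) : ℚ))
        = m * ((s : ℚ) * (2 * (m * s) + 1)) := by
      rw [Finset.sum_congr rfl fun i _ => hrowq i, Finset.sum_const, Finset.card_univ,
        Fintype.card_fin, nsmul_eq_mul]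
    rw [hsum, hgsum] at hcheb
    rw [hgsq]
    have hm0 : (0 : ℚ) < m := by exact_mod_cast hm
    nlinarith [hcheb]
  -- prodSum g ≤ prodSum f₀
  have hps : prodSum (mKGraph m r) g ≤ prodSum (mKGraph m r) f₀ := by
    have h1 := key f₀ hf₀
    have h2 := key g hgl
    have : (prodSum (mKGraph m r) g : ℚ) ≤ (prodSum (mKGraph m r) f₀ : ℚ) := by linarith
    exact_mod_cast this
  have hmin : minPS (mKGraph m r) = prodSum (mKGraph m r) g := by
    have : prodSum (mKGraph m r) g ≤ sInf S := hf₀v ▸ hps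
    exact le_antisymm hle this
  rw [hmin]
  -- final computation
  have h2 := key g hgl
  rw [hgsq] at h2
  have hQ := sum_Icc_sq (m * r)
  push_cast at hQ
  have hrq : (r : ℚ) = 2 * s := by exact_mod_cast hr'
  rw [hrq] at hQ
  rw [hrq]
  linear_combination (h2 - hQ) / 2
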